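/- Under the assumptions: L is symmetric, satisfies the triangle inequality, and is k-Lipschitz in its second argument; f₀ satisfies |f₀(x₁) − f₀(x₂)| ≤ M for all x₁, x₂; f₀ together with the optimal coupling π* between P_T̂ and P_T is φ-Lipschitz transferable; and α = kλ. Then |err_T̂(y, f₀) − err_T(y, f₀)| ≤ W(P_T̂, P_T) + kM φ(λ), where W(P_T̂, P_T) = inf_π ∫ [α d(x₁, x₂) + L(y₁, y₂)] dπ((x₁,y₁),(x₂,y₂)). -/

import Mathlib

open MeasureTheory

/-- A coupling of two probability measures on `Z`. -/
def IsCoupling {Z : Type*} [MeasurableSpace Z]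
    (π : Measure (Z × Z)) (μ ν : Measure Z) : Prop :=
  π.map Prod.fst = μ ∧ π.map Prod.snd = ν

/-- under symmetry, triangle inequality and `k`-Lipschitzness of the
loss, a uniform bound `M` on the oscillation of `f₀`, probabilistic transfer
Lipschitzness of `(f₀, π*)` for the optimal coupling `π*`, and `α = kλ`,
`|err_T̂(y, f₀) − err_T(y, f₀)| ≤ W(P_T̂, P_T) + kMφ(λ)`, where `W` is the OT
cost with ground cost `α d(x₁,x₂) + L(y₁,y₂)`. -/
theorem stmt_8 {X : Type*} [MeasurableSpace X] [MetricSpace X]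
    (PThat PT : Measure (X × ℝ)) [IsProbabilityMeasure PThat] [IsProbabilityMeasure PT]
    (L : ℝ → ℝ → ℝ)
    (hnonneg : ∀ y₁ y₂, 0 ≤ L y₁ y₂)
    (hsym : ∀ y₁ y₂, L y₁ y₂ = L y₂ y₁)
    (htri : ∀ y₁ y₂ y₃, L y₁ y₃ ≤ L y₁ y₂ + L y₂ y₃)
    (k lam α M : ℝ) (hk : 0 ≤ k) (hlam : 0 < lam) (hM : 0 ≤ M) (hα : α = k * lam)
    (hlip : ∀ y₁ y₂ y₃, |L y₁ y₂ - L y₁ y₃| ≤ k * |y₂ - y₃|)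
    (f₀ : X → ℝ)
    (hbd : ∀ x₁ x₂ : X, |f₀ x₁ - f₀ x₂| ≤ M)
    (φlam : ℝ)
    (πstar : Measure ((X × ℝ) × (X × ℝ))) [IsProbabilityMeasure πstar]
    (hcoupling : IsCoupling πstar PThat PT)
    -- π* is an optimal coupling: it attains the OT cost W(P_T̂, P_T)
    (hopt : (∫ z : (X × ℝ) × (X × ℝ), (α * dist z.1.1 z.2.1 + L z.1.2 z.2.2) ∂πstar)
        = sInf {r : ℝ | ∃ π : Measure ((X × ℝ) × (X × ℝ)),
            IsProbabilityMeasure π ∧ IsCoupling π PThat PT ∧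
            r = ∫ z : (X × ℝ) × (X × ℝ), (α * dist z.1.1 z.2.1 + L z.1.2 z.2.2) ∂π})
    -- probabilistic transfer Lipschitzness of (f₀, π*) at level λ
    (hPTL : (πstar {z : (X × ℝ) × (X × ℝ) |
        lam * dist z.1.1 z.2.1 < |f₀ z.1.1 - f₀ z.2.1|}).toReal ≤ φlam)
    (hint1 : Integrable (fun z : X × ℝ => L z.2 (f₀ z.1)) PThat)
    (hint2 : Integrable (fun z : X × ℝ => L z.2 (f₀ z.1)) PT)
    (hint3 : Integrable (fun z : (X × ℝ) × (X × ℝ) =>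
        α * dist z.1.1 z.2.1 + L z.1.2 z.2.2) πstar) :
    |(∫ z, L z.2 (f₀ z.1) ∂PThat) - (∫ z, L z.2 (f₀ z.1) ∂PT)|
      ≤ sInf {r : ℝ | ∃ π : Measure ((X × ℝ) × (X × ℝ)),
            IsProbabilityMeasure π ∧ IsCoupling π PThat PT ∧
            r = ∫ z : (X × ℝ) × (X × ℝ), (α * dist z.1.1 z.2.1 + L z.1.2 z.2.2) ∂π}
        + k * M * φlam := by
  rw [← hopt]
  obtain ⟨h1, h2⟩ := hcoupling
  -- pointwise bound lemma
  have key : ∀ (y₁ y₂ a b : ℝ), |L y₁ a - L y₂ b| ≤ L y₁ y₂ + k * |a - b| := by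
    intro y₁ y₂ a b
    rw [abs_sub_le_iff]
    constructor
    · have t1 := htri y₁ y₂ a
      have t2 : L y₂ a - L y₂ b ≤ k * |a - b| :=
        (le_abs_self _).trans (hlip y₂ a b)
      linarith
    · have t1 := htri y₂ y₁ b
      have t2 : L y₁ b - L y₁ a ≤ k * |b - a| :=
        (le_abs_self _).trans (hlip y₁ b a)
      rw [abs_sub_comm a b]
      linarith [hsym y₁ y₂]
  -- rewrite integrals via pushforwards
  have hmf : Measurable (Prod.fst : (X × ℝ) × (X × ℝ) → X × ℝ) := measurable_fst
  have hms : Measurable (Prod.snd : (X × ℝ) × (X × ℝ) → X × ℝ) := measurable_snd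
  have e1 : (∫ z, L z.2 (f₀ z.1) ∂PThat)
      = ∫ z : (X × ℝ) × (X × ℝ), L z.1.2 (f₀ z.1.1) ∂πstar := by
    rw [← h1, integral_map hmf.aemeasurable]
    · rw [h1]; exact hint1.aestronglyMeasurable
  have e2 : (∫ z, L z.2 (f₀ z.1) ∂PT)
      = ∫ z : (X × ℝ) × (X × ℝ), L z.2.2 (f₀ z.2.1) ∂πstar := by
    rw [← h2, integral_map hms.aemeasurable]
    · rw [h2]; exact hint2.aestronglyMeasurable
  have i1 : Integrable (fun z : (X × ℝ) × (X × ℝ) => L z.1.2 (f₀ z.1.1)) πstar := by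
    have := (integrable_map_measure (by rw [h1]; exact hint1.aestronglyMeasurable)
      hmf.aemeasurable).mp (by rw [h1]; exact hint1)
    exact this
  have i2 : Integrable (fun z : (X × ℝ) × (X × ℝ) => L z.2.2 (f₀ z.2.1)) πstar := by
    have := (integrable_map_measure (by rw [h2]; exact hint2.aestronglyMeasurable)
      hms.aemeasurable).mp (by rw [h2]; exact hint2)
    exact this
  rw [e1, e2, ← integral_sub i1 i2]
  -- the bad set and its measurable hull
  set A : Set ((X × ℝ) × (X × ℝ)) :=
    {z | lam * dist z.1.1 z.2.1 < |f₀ z.1.1 - f₀ z.2.1|} with hA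
  set B := toMeasurable πstar A with hB
  have hBmeas : MeasurableSet B := measurableSet_toMeasurable _ _
  have hAB : A ⊆ B := subset_toMeasurable _ _
  have hBA : πstar B = πstar A := measure_toMeasurable _
  -- bound function
  set g : ((X × ℝ) × (X × ℝ)) → ℝ :=
    fun z => (α * dist z.1.1 z.2.1 + L z.1.2 z.2.2) + B.indicator (fun _ => k * M) z with hg
  have hgint : Integrable g πstar := by
    apply hint3.add
    exact (integrable_indicator_iff hBmeas).2 (integrableOn_const (measure_ne_top _ _))
  have hptwise : ∀ z : (X × ℝ) × (X × ℝ),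
      |L z.1.2 (f₀ z.1.1) - L z.2.2 (f₀ z.2.1)| ≤ g z := by
    intro z
    refine (key _ _ _ _).trans ?_
    by_cases hz : z ∈ A
    · have hind : B.indicator (fun _ => k * M) z = k * M := Set.indicator_of_mem (hAB hz) _
      have : k * |f₀ z.1.1 - f₀ z.2.1| ≤ k * M :=
        mul_le_mul_of_nonneg_left (hbd _ _) hk
      have hd : 0 ≤ α * dist z.1.1 z.2.1 := by
        apply mul_nonneg _ dist_nonneg
        rw [hα]; exact mul_nonneg hk hlam.le
      simp only [hg]
      rw [hind]
      linarith
    · have hz' : |f₀ z.1.1 - f₀ z.2.1| ≤ lam * dist z.1.1 z.2.1 := le_of_not_gt hz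
      have : k * |f₀ z.1.1 - f₀ z.2.1| ≤ α * dist z.1.1 z.2.1 := by
        rw [hα, mul_assoc]
        exact mul_le_mul_of_nonneg_left hz' hk
      have hind : 0 ≤ B.indicator (fun _ => k * M) z := by
        apply Set.indicator_nonneg
        intro _ _; exact mul_nonneg hk hM
      simp only [hg]
      linarith
  calc |∫ z, (L z.1.2 (f₀ z.1.1) - L z.2.2 (f₀ z.2.1)) ∂πstar|
      ≤ ∫ z, |L z.1.2 (f₀ z.1.1) - L z.2.2 (f₀ z.2.1)| ∂πstar := by
        simpa [Real.norm_eq_abs] using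
          norm_integral_le_integral_norm (fun z : (X × ℝ) × (X × ℝ) =>
            L z.1.2 (f₀ z.1.1) - L z.2.2 (f₀ z.2.1)) (μ := πstar)
    _ ≤ ∫ z, g z ∂πstar := integral_mono (i1.sub i2).abs hgint hptwise
    _ = (∫ z : (X × ℝ) × (X × ℝ), (α * dist z.1.1 z.2.1 + L z.1.2 z.2.2) ∂πstar)
        + ∫ z, B.indicator (fun _ => k * M) z ∂πstar := by
        exact integral_add hint3 ((integrable_indicator_iff hBmeas).2
          (integrableOn_const (measure_ne_top _ _)))
    _ ≤ _ := by
        have : ∫ z, B.indicator (fun _ => k * M) z ∂πstar = (πstar B).toReal * (k * M) := by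
          rw [integral_indicator_const _ hBmeas]; simp [mul_comm, measureReal_def]
        rw [this, hBA]
        have hle : (πstar A).toReal * (k * M) ≤ φlam * (k * M) :=
          mul_le_mul_of_nonneg_right hPTL (mul_nonneg hk hM)
        linarith
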